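/- Let A be an n×n real symmetric matrix and u ∈ ℝⁿ a nonzero vector with uᵀAu ≠ 0. Let θ = (uᵀAu)/(uᵀu), θ̃ = (uᵀA²u)/(uᵀAu), and α = [uᵀA²u − uᵀu + √((uᵀA²u − uᵀu)² + 4(uᵀAu)²)]/(2uᵀAu). If uᵀAu > 0 then θ ≤ α ≤ θ̃, and if uᵀAu < 0 then θ̃ ≤ α ≤ θ. -/

import Mathlib

open Matrix

private lemma dot_self_nonneg {m : ℕ} (v : Fin m → ℝ) : 0 ≤ v ⬝ᵥ v :=
  Finset.sum_nonneg fun i _ => mul_self_nonneg (v i)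

private lemma key_sqrt (p q r : ℝ) (hp : 0 < p) (hr : 0 ≤ r) (hcs : q ^ 2 ≤ p * r) :
    Real.sqrt ((r - p) ^ 2 + 4 * q ^ 2) ≤ r + p ∧
    2 * q ^ 2 / p ≤ (r - p) + Real.sqrt ((r - p) ^ 2 + 4 * q ^ 2) := by
  have hs0 : 0 ≤ Real.sqrt ((r - p) ^ 2 + 4 * q ^ 2) := Real.sqrt_nonneg _
  have hs2 : Real.sqrt ((r - p) ^ 2 + 4 * q ^ 2) ^ 2 = (r - p) ^ 2 + 4 * q ^ 2 :=
    Real.sq_sqrt (by positivity)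
  constructor
  · have h1 : (r - p) ^ 2 + 4 * q ^ 2 ≤ (r + p) ^ 2 := by nlinarith
    calc Real.sqrt ((r - p) ^ 2 + 4 * q ^ 2) ≤ Real.sqrt ((r + p) ^ 2) :=
          Real.sqrt_le_sqrt h1
    _ = r + p := Real.sqrt_sq (by linarith)
  · rcases le_or_gt (2 * q ^ 2 / p) (r - p) with h | h
    · linarith
    · have ht : 0 < 2 * q ^ 2 / p - (r - p) := by linarith
      have hpt : p * (2 * q ^ 2 / p - (r - p)) = 2 * q ^ 2 - p * (r - p) := by
        field_simp
      have h2 : (2 * q ^ 2 / p - (r - p)) ^ 2 ≤ (r - p) ^ 2 + 4 * q ^ 2 := by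
        have h3 : p ^ 2 * (2 * q ^ 2 / p - (r - p)) ^ 2
            ≤ p ^ 2 * ((r - p) ^ 2 + 4 * q ^ 2) := by
          have he : p ^ 2 * (2 * q ^ 2 / p - (r - p)) ^ 2
              = (2 * q ^ 2 - p * (r - p)) ^ 2 := by
            rw [← hpt]; ring
          rw [he]
          nlinarith [mul_nonneg (sq_nonneg q) (sub_nonneg.2 hcs)]
        exact le_of_mul_le_mul_left h3 (by positivity)
      have := (Real.le_sqrt ht.le (by positivity)).2 h2
      linarith

/-- The homogeneous Rayleigh quotient `α` lies between the standard Rayleigh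
quotient `θ = uᵀAu/uᵀu` and the harmonic Rayleigh quotient `θ̃ = uᵀA²u/uᵀAu`:
`θ ≤ α ≤ θ̃` if `uᵀAu > 0`, and `θ̃ ≤ α ≤ θ` if `uᵀAu < 0`. -/
theorem homogeneous_rq_between
    {n : ℕ} (A : Matrix (Fin n) (Fin n) ℝ) (hA : A.IsSymm)
    (u : Fin n → ℝ) (hu : u ≠ 0) (huAu : u ⬝ᵥ A.mulVec u ≠ 0)
    (θ θt α : ℝ)
    (hθ : θ = (u ⬝ᵥ A.mulVec u) / (u ⬝ᵥ u))
    (hθt : θt = (u ⬝ᵥ (A * A).mulVec u) / (u ⬝ᵥ A.mulVec u))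
    (hα : α = (u ⬝ᵥ (A * A).mulVec u - u ⬝ᵥ u +
      Real.sqrt ((u ⬝ᵥ (A * A).mulVec u - u ⬝ᵥ u)^2 + 4 * (u ⬝ᵥ A.mulVec u)^2)) /
      (2 * (u ⬝ᵥ A.mulVec u))) :
    (0 < u ⬝ᵥ A.mulVec u → θ ≤ α ∧ α ≤ θt) ∧
    (u ⬝ᵥ A.mulVec u < 0 → θt ≤ α ∧ α ≤ θ) := by
  set p := u ⬝ᵥ u with hpdef
  set q := u ⬝ᵥ A.mulVec u with hqdef
  set r := u ⬝ᵥ (A * A).mulVec u with hrdef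
  have hp : 0 < p := by
    rcases lt_or_eq_of_le (dot_self_nonneg u) with h | h
    · exact h
    · exact absurd (dotProduct_self_eq_zero.1 h.symm) hu
  have hrv : r = (A.mulVec u) ⬝ᵥ (A.mulVec u) := by
    rw [hrdef, ← mulVec_mulVec, dotProduct_mulVec, ← mulVec_transpose, hA.eq]
  have hr : 0 ≤ r := hrv ▸ dot_self_nonneg _
  have hcs : q ^ 2 ≤ p * r := by
    rw [hqdef, hpdef, hrv]
    have := Finset.sum_mul_sq_le_sq_mul_sq Finset.univ u (A.mulVec u)
    simpa [dotProduct, sq] using this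
  obtain ⟨h1, h2⟩ := key_sqrt p q r hp hr hcs
  set s := Real.sqrt ((r - p) ^ 2 + 4 * q ^ 2) with hs
  have hs0 : 0 ≤ s := Real.sqrt_nonneg _
  have hα' : α = (r - p + s) / (2 * q) := hα
  have h2' : 2 * q ^ 2 ≤ (r - p + s) * p := by
    have := (div_le_iff₀ hp).1 h2
    linarith
  constructor
  · intro hq
    constructor
    · rw [hθ, hα', div_le_div_iff₀ hp (by linarith)]
      nlinarith
    · rw [hθt, hα', div_le_div_iff₀ (by linarith) hq]
      nlinarith
  · intro hq
    have h2q : 2 * q < 0 := by linarith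
    constructor
    · rw [hθt, hα', le_div_iff_of_neg h2q]
      have : r / q * (2 * q) = 2 * r := by field_simp
      rw [this]
      nlinarith
    · rw [hθ, hα', div_le_iff_of_neg h2q]
      have : q / p * (2 * q) = 2 * q ^ 2 / p := by field_simp
      rw [this]
      exact h2
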